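/- Let $\tilde{\mathbb{A}}$ be the minimal ambiguity over all set-valued classifiers $\mathbf{H}$ satisfying both the class-specific coverage constraints $\mathbb{P}\{Y \in \mathbf{H}(X)|Y=y\} \geq 1-\alpha_y$ for all $y$ and the no-null-region constraint $\mathbf{H}(x) \neq \emptyset$ for all $x$. Let $\mathbf{H}^*$ be a minimizer of ambiguity subject only to the coverage constraints, with null region $\mathcal{N}(\mathbf{H}^*) = \{x : \mathbf{H}^*(x) = \emptyset\}$. Let $\mathbf{H}^\dagger$ agree with $\mathbf{H}^*$ outside $\mathcal{N}(\mathbf{H}^*)$ and satisfy $|\mathbf{H}^\dagger(x)| = 1$ on $\mathcal{N}(\mathbf{H}^*)$. Then $\tilde{\mathbb{A}} \leq \mathbb{A}(\mathbf{H}^\dagger) \leq \tilde{\mathbb{A}} + \mathbb{P}\{X \in \mathcal{N}(\mathbf{H}^*)\}$. -/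

import Mathlib

open MeasureTheory

/-- Excess risk bound for filling the null region with a single-valued classifier:
`Ã ≤ 𝔸(H†) ≤ Ã + ℙ(𝒩(H*))`. -/
theorem stmt6 {Ω 𝓧 : Type*} [MeasureSpace Ω] [IsProbabilityMeasure (volume : Measure Ω)]
    [MeasurableSpace 𝓧] {K : ℕ}
    (X : Ω → 𝓧) (Y : Ω → Fin K) (hX : Measurable X) (hY : Measurable Y)
    (hpos : ∀ y : Fin K, volume {ω | Y ω = y} ≠ 0)
    (α : Fin K → ℝ)
    -- the coverage constraint predicate
    (Cov : (𝓧 → Finset (Fin K)) → Prop)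
    (hCov : ∀ H, Cov H ↔ (∀ y : Fin K, MeasurableSet {x | y ∈ H x}) ∧
      ∀ y : Fin K, 1 - α y ≤
        (volume {ω | Y ω ∈ H (X ω) ∧ Y ω = y}).toReal / (volume {ω | Y ω = y}).toReal)
    -- the ambiguity functional
    (A : (𝓧 → Finset (Fin K)) → ℝ)
    (hA : ∀ H, A H = ∫ ω, ((H (X ω)).card : ℝ))
    -- Ã is the minimal ambiguity subject to coverage and no null region
    (Atil : ℝ)
    (hAtil_attained : ∃ H0, Cov H0 ∧ (∀ x, H0 x ≠ ∅) ∧ A H0 = Atil)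
    (hAtil_min : ∀ H, Cov H → (∀ x, H x ≠ ∅) → Atil ≤ A H)
    -- H* minimizes ambiguity subject only to coverage
    (Hstar : 𝓧 → Finset (Fin K))
    (hHstar_cov : Cov Hstar)
    (hHstar_min : ∀ H, Cov H → A Hstar ≤ A H)
    -- H† agrees with H* outside the null region and is single-valued on it
    (Hdag : 𝓧 → Finset (Fin K))
    (hdag_meas : ∀ y : Fin K, MeasurableSet {x | y ∈ Hdag x})
    (hdag_agree : ∀ x, Hstar x ≠ ∅ → Hdag x = Hstar x)
    (hdag_fill : ∀ x, Hstar x = ∅ → (Hdag x).card = 1) :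
    Atil ≤ A Hdag ∧
      A Hdag ≤ Atil + (volume {ω | Hstar (X ω) = ∅}).toReal := by
  obtain ⟨hSm, hScov⟩ := (hCov Hstar).mp hHstar_cov
  -- Hdag satisfies the coverage constraints
  have hCovDag : Cov Hdag := by
    rw [hCov]
    refine ⟨hdag_meas, fun y => ?_⟩
    refine le_trans (hScov y) ?_
    have hsub : {ω | Y ω ∈ Hstar (X ω) ∧ Y ω = y} ⊆ {ω | Y ω ∈ Hdag (X ω) ∧ Y ω = y} := by
      rintro ω ⟨h1, h2⟩
      have hne : Hstar (X ω) ≠ ∅ := Finset.ne_empty_of_mem h1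
      exact ⟨(hdag_agree _ hne) ▸ h1, h2⟩
    have hle : (volume {ω | Y ω ∈ Hstar (X ω) ∧ Y ω = y}).toReal ≤
        (volume {ω | Y ω ∈ Hdag (X ω) ∧ Y ω = y}).toReal :=
      ENNReal.toReal_le_toReal (measure_ne_top _ _) (measure_ne_top _ _) |>.mpr
        (measure_mono hsub)
    gcongr
  -- Hdag has no null region
  have hne : ∀ x, Hdag x ≠ ∅ := by
    intro x
    by_cases h : Hstar x = ∅
    · have := hdag_fill x h
      intro hcon
      rw [hcon] at this
      simp at this
    · rw [hdag_agree x h]; exact h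
  have h1 : Atil ≤ A Hdag := hAtil_min Hdag hCovDag hne
  refine ⟨h1, ?_⟩
  -- A Hstar ≤ Atil
  obtain ⟨H0, hc0, _, hA0⟩ := hAtil_attained
  have hstar_le : A Hstar ≤ Atil := hA0 ▸ hHstar_min H0 hc0
  -- the null region of Hstar
  set N : Set 𝓧 := {x | Hstar x = ∅} with hN
  have hNm : MeasurableSet N := by
    have : N = (⋃ y : Fin K, {x | y ∈ Hstar x})ᶜ := by
      ext x
      simp [hN, Finset.eq_empty_iff_forall_notMem]
    rw [this]
    exact (MeasurableSet.iUnion fun y => hSm y).compl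
  have hTm : MeasurableSet (X ⁻¹' N) := hX hNm
  -- pointwise decomposition
  have key : ∀ ω, ((Hdag (X ω)).card : ℝ) =
      ((Hstar (X ω)).card : ℝ) + (X ⁻¹' N).indicator (fun _ => (1:ℝ)) ω := by
    intro ω
    by_cases h : Hstar (X ω) = ∅
    · rw [hdag_fill _ h, h, Set.indicator_of_mem (by exact h)]
      simp
    · rw [hdag_agree _ h, Set.indicator_of_notMem (by exact h)]
      simp
  -- measurability of card functions
  have cardsum : ∀ (H : 𝓧 → Finset (Fin K)) (x : 𝓧),
      ((H x).card : ℝ) = ∑ y : Fin K, if y ∈ H x then (1:ℝ) else 0 := by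
    intro H x
    rw [Finset.sum_boole]
    simp
  have meas : ∀ (H : 𝓧 → Finset (Fin K)), (∀ y : Fin K, MeasurableSet {x | y ∈ H x}) →
      Measurable (fun ω => ((H (X ω)).card : ℝ)) := by
    intro H hm
    have : (fun ω => ((H (X ω)).card : ℝ)) =
        fun ω => ∑ y : Fin K, if y ∈ H (X ω) then (1:ℝ) else 0 := by
      funext ω; exact cardsum H (X ω)
    rw [this]
    exact Finset.measurable_sum _ fun y _ =>
      Measurable.ite (hX (hm y)) measurable_const measurable_const
  have integ : ∀ (H : 𝓧 → Finset (Fin K)), (∀ y : Fin K, MeasurableSet {x | y ∈ H x}) →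
      Integrable (fun ω => ((H (X ω)).card : ℝ)) := by
    intro H hm
    refine Integrable.mono' (integrable_const (K : ℝ)) (meas H hm).aestronglyMeasurable
      (ae_of_all _ fun ω => ?_)
    rw [Real.norm_eq_abs, abs_of_nonneg (by positivity)]
    have := Finset.card_le_univ (H (X ω))
    simp only [Finset.card_univ, Fintype.card_fin] at this
    exact_mod_cast this
  have integ_ind : Integrable ((X ⁻¹' N).indicator (fun _ => (1:ℝ))) :=
    (integrable_const (1:ℝ)).indicator hTm
  -- integral decomposition
  have hsplit : A Hdag = A Hstar + (volume (X ⁻¹' N)).toReal := by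
    rw [hA, hA]
    have : (fun ω => ((Hdag (X ω)).card : ℝ)) =
        fun ω => ((Hstar (X ω)).card : ℝ) + (X ⁻¹' N).indicator (fun _ => (1:ℝ)) ω := by
      funext ω; exact key ω
    rw [this, integral_add (integ Hstar hSm) integ_ind, integral_indicator_const _ hTm]
    simp
    rfl
  have hsetEq : {ω | Hstar (X ω) = ∅} = X ⁻¹' N := rfl
  rw [hsetEq, hsplit]
  linarith
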